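/- Let K be a simplicial complex on vertex set ⊆ [m], σ ∈ K and ω ⊆ [m] with σ ∩ ω = ∅. Then for every η ⊆ ω: ω\η ∉ K_{σ,ω} if and only if [m]\(σ ∪ (ω\η)) ∈ K*, where K_{σ,ω} = { ω ∩ τ : τ ∈ K, τ ∩ σ = ∅, τ ∪ σ ∈ K } and K* is the Alexander dual of K relative to [m]. -/
import Mathlib

/-- A simplicial complex on vertex set contained in `[m] = Fin m`. -/
def IsSimplicialComplex {m : ℕ} (K : Set (Finset (Fin m))) : Prop :=
  ∀ σ ∈ K, ∀ τ ⊆ σ, τ ∈ K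

/-- `link_K(σ) = { τ ∈ K : τ ∩ σ = ∅, τ ∪ σ ∈ K }`. -/
def link {m : ℕ} (K : Set (Finset (Fin m))) (σ : Finset (Fin m)) : Set (Finset (Fin m)) :=
  {τ | τ ∈ K ∧ τ ∩ σ = ∅ ∧ τ ∪ σ ∈ K}

/-- `K_{σ,ω} = { ω ∩ τ : τ ∈ link_K(σ) }`. -/
def linkRestrict {m : ℕ} (K : Set (Finset (Fin m))) (σ ω : Finset (Fin m)) :
    Set (Finset (Fin m)) :=
  {ρ | ∃ τ ∈ link K σ, ρ = ω ∩ τ}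

/-- The Alexander dual of `K` relative to `[m]`. -/
def alexanderDual {m : ℕ} (K : Set (Finset (Fin m))) : Set (Finset (Fin m)) :=
  {τ | τᶜ ∉ K}

/-- for every `η ⊆ ω`, `ω\η ∉ K_{σ,ω}` iff `[m]\(σ ∪ (ω\η)) ∈ K*`. -/
theorem not_mem_linkRestrict_iff {m : ℕ} (K : Set (Finset (Fin m)))
    (hK : IsSimplicialComplex K) (σ ω : Finset (Fin m)) (hσ : σ ∈ K)
    (hσω : σ ∩ ω = ∅) (η : Finset (Fin m)) (hη : η ⊆ ω) :
    ω \ η ∉ linkRestrict K σ ω ↔ (σ ∪ (ω \ η))ᶜ ∈ alexanderDual K := by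
  simp only [alexanderDual, Set.mem_setOf_eq, compl_compl]
  rw [not_iff_not]
  constructor
  · rintro ⟨τ, ⟨hτK, hτσ, hτσK⟩, hωτ⟩
    refine hK _ hτσK _ ?_
    rw [hωτ, Finset.union_comm τ σ]
    exact Finset.union_subset_union subset_rfl Finset.inter_subset_right
  · intro h
    refine ⟨ω \ η, ⟨hK _ h _ Finset.subset_union_right, ?_, ?_⟩, ?_⟩
    · rw [Finset.inter_comm, ← Finset.disjoint_iff_inter_eq_empty]
      exact (Finset.disjoint_iff_inter_eq_empty.mpr hσω).mono_right (Finset.sdiff_subset)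
    · rwa [Finset.union_comm]
    · rw [Finset.inter_eq_right.mpr Finset.sdiff_subset]
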